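/- Let A = [A11, A12; A21, A22] and B = [B11, B12; B21, B22] be like-sized self-adjoint block 2×2 complex matrices such that for every t ∈ [0,1] the matrix (1−t)A11 + tB11 is invertible. If A ⪯ B (i.e., B − A is positive semidefinite), then PPT(A) ⪯ PPT(B). -/

import Mathlib

open Matrix
open scoped ComplexOrder

/-- The principal pivot transform of a block 2×2 matrix
`A = [A11, A12; A21, A22]` with `A11` an invertible square block:
`PPT(A) = [−A11⁻¹, A11⁻¹A12; A21A11⁻¹, A22 − A21A11⁻¹A12]`. -/
noncomputable def PPT {n m : ℕ} (A : Matrix (Fin n ⊕ Fin m) (Fin n ⊕ Fin m) ℂ) :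
    Matrix (Fin n ⊕ Fin m) (Fin n ⊕ Fin m) ℂ :=
  Matrix.fromBlocks (-(A.toBlocks₁₁)⁻¹) ((A.toBlocks₁₁)⁻¹ * A.toBlocks₁₂)
    (A.toBlocks₂₁ * (A.toBlocks₁₁)⁻¹)
    (A.toBlocks₂₂ - A.toBlocks₂₁ * (A.toBlocks₁₁)⁻¹ * A.toBlocks₁₂)

lemma PPTaux.toBlocks₁₁_conjTranspose {n m : ℕ}
    (M : Matrix (Fin n ⊕ Fin m) (Fin n ⊕ Fin m) ℂ) :
    (Mᴴ).toBlocks₁₁ = (M.toBlocks₁₁)ᴴ := rfl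

lemma PPTaux.toBlocks₁₂_conjTranspose {n m : ℕ}
    (M : Matrix (Fin n ⊕ Fin m) (Fin n ⊕ Fin m) ℂ) :
    (Mᴴ).toBlocks₁₂ = (M.toBlocks₂₁)ᴴ := rfl

lemma PPTaux.toBlocks₂₁_conjTranspose {n m : ℕ}
    (M : Matrix (Fin n ⊕ Fin m) (Fin n ⊕ Fin m) ℂ) :
    (Mᴴ).toBlocks₂₁ = (M.toBlocks₁₂)ᴴ := rfl

lemma PPTaux.toBlocks₂₂_conjTranspose {n m : ℕ}
    (M : Matrix (Fin n ⊕ Fin m) (Fin n ⊕ Fin m) ℂ) :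
    (Mᴴ).toBlocks₂₂ = (M.toBlocks₂₂)ᴴ := rfl

lemma PPTaux.b11 {n m : ℕ} {M : Matrix (Fin n ⊕ Fin m) (Fin n ⊕ Fin m) ℂ}
    (hM : M.IsHermitian) : (M.toBlocks₁₁)ᴴ = M.toBlocks₁₁ := by
  rw [← PPTaux.toBlocks₁₁_conjTranspose, hM.eq]

lemma PPTaux.b12 {n m : ℕ} {M : Matrix (Fin n ⊕ Fin m) (Fin n ⊕ Fin m) ℂ}
    (hM : M.IsHermitian) : (M.toBlocks₁₂)ᴴ = M.toBlocks₂₁ := by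
  rw [← PPTaux.toBlocks₂₁_conjTranspose, hM.eq]

lemma PPTaux.b21 {n m : ℕ} {M : Matrix (Fin n ⊕ Fin m) (Fin n ⊕ Fin m) ℂ}
    (hM : M.IsHermitian) : (M.toBlocks₂₁)ᴴ = M.toBlocks₁₂ := by
  rw [← PPTaux.toBlocks₁₂_conjTranspose, hM.eq]

lemma PPTaux.b22 {n m : ℕ} {M : Matrix (Fin n ⊕ Fin m) (Fin n ⊕ Fin m) ℂ}
    (hM : M.IsHermitian) : (M.toBlocks₂₂)ᴴ = M.toBlocks₂₂ := by
  rw [← PPTaux.toBlocks₂₂_conjTranspose, hM.eq]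

/-- `PPT` of a Hermitian matrix is Hermitian. -/
lemma PPTaux.ppt_isHermitian {n m : ℕ} {M : Matrix (Fin n ⊕ Fin m) (Fin n ⊕ Fin m) ℂ}
    (hM : M.IsHermitian) : (PPT M).IsHermitian := by
  have h11 := PPTaux.b11 hM
  have h12 := PPTaux.b12 hM
  have h21 := PPTaux.b21 hM
  have h22 := PPTaux.b22 hM
  unfold PPT
  rw [Matrix.IsHermitian, fromBlocks_conjTranspose]
  rw [Matrix.fromBlocks_inj]
  refine ⟨?_, ?_, ?_, ?_⟩
  · rw [conjTranspose_neg, conjTranspose_nonsing_inv, h11]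
  · rw [conjTranspose_mul, conjTranspose_nonsing_inv, h11, h21]
  · rw [conjTranspose_mul, conjTranspose_nonsing_inv, h11, h12]
  · rw [conjTranspose_sub, h22, conjTranspose_mul, conjTranspose_mul,
      conjTranspose_nonsing_inv, h11, h12, h21, Matrix.mul_assoc]

/-- Conjugate transpose of the right congruence factor is the left one. -/
lemma PPTaux.Jconj {n m : ℕ} {M : Matrix (Fin n ⊕ Fin m) (Fin n ⊕ Fin m) ℂ}
    (hM : M.IsHermitian) :
    (fromBlocks (M.toBlocks₁₁)⁻¹ (-((M.toBlocks₁₁)⁻¹ * M.toBlocks₁₂))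
        (0 : Matrix (Fin m) (Fin n) ℂ) (1 : Matrix (Fin m) (Fin m) ℂ))ᴴ
      = fromBlocks (M.toBlocks₁₁)⁻¹ 0 (-(M.toBlocks₂₁ * (M.toBlocks₁₁)⁻¹)) 1 := by
  rw [fromBlocks_conjTranspose]
  rw [Matrix.fromBlocks_inj]
  refine ⟨?_, ?_, ?_, ?_⟩
  · rw [conjTranspose_nonsing_inv, PPTaux.b11 hM]
  · simp
  · rw [conjTranspose_neg, conjTranspose_mul, conjTranspose_nonsing_inv,
      PPTaux.b11 hM, PPTaux.b12 hM]
  · simp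

lemma PPTaux.ppt_diff {n m : ℕ} (M N : Matrix (Fin n ⊕ Fin m) (Fin n ⊕ Fin m) ℂ)
    (hM : IsUnit M.toBlocks₁₁) (hN : IsUnit N.toBlocks₁₁) :
    PPT N - PPT M =
      fromBlocks (M.toBlocks₁₁)⁻¹ 0 (-(M.toBlocks₂₁ * (M.toBlocks₁₁)⁻¹)) 1 *
        (N - M) *
      fromBlocks (N.toBlocks₁₁)⁻¹ (-((N.toBlocks₁₁)⁻¹ * N.toBlocks₁₂)) 0 1 := by
  have hMd : IsUnit M.toBlocks₁₁.det := (Matrix.isUnit_iff_isUnit_det _).mp hM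
  have hNd : IsUnit N.toBlocks₁₁.det := (Matrix.isUnit_iff_isUnit_det _).mp hN
  have hM1 : M.toBlocks₁₁⁻¹ * M.toBlocks₁₁ = 1 := Matrix.nonsing_inv_mul _ hMd
  have hM2 : M.toBlocks₁₁ * M.toBlocks₁₁⁻¹ = 1 := Matrix.mul_nonsing_inv _ hMd
  have hN1 : N.toBlocks₁₁⁻¹ * N.toBlocks₁₁ = 1 := Matrix.nonsing_inv_mul _ hNd
  have hN2 : N.toBlocks₁₁ * N.toBlocks₁₁⁻¹ = 1 := Matrix.mul_nonsing_inv _ hNd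
  have hsub : N - M = fromBlocks (N.toBlocks₁₁ - M.toBlocks₁₁) (N.toBlocks₁₂ - M.toBlocks₁₂)
      (N.toBlocks₂₁ - M.toBlocks₂₁) (N.toBlocks₂₂ - M.toBlocks₂₂) := by
    ext (i|i) (j|j) <;>
      simp [fromBlocks, toBlocks₁₁, toBlocks₁₂, toBlocks₂₁, toBlocks₂₂]
  have hM1' : ∀ {l : Type} (X : Matrix (Fin n) l ℂ), M.toBlocks₁₁⁻¹ * (M.toBlocks₁₁ * X) = X := by
    intro l X; rw [← Matrix.mul_assoc, hM1, Matrix.one_mul]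
  have hM2' : ∀ {l : Type} (X : Matrix (Fin n) l ℂ), M.toBlocks₁₁ * (M.toBlocks₁₁⁻¹ * X) = X := by
    intro l X; rw [← Matrix.mul_assoc, hM2, Matrix.one_mul]
  have hN1' : ∀ {l : Type} (X : Matrix (Fin n) l ℂ), N.toBlocks₁₁⁻¹ * (N.toBlocks₁₁ * X) = X := by
    intro l X; rw [← Matrix.mul_assoc, hN1, Matrix.one_mul]
  have hN2' : ∀ {l : Type} (X : Matrix (Fin n) l ℂ), N.toBlocks₁₁ * (N.toBlocks₁₁⁻¹ * X) = X := by
    intro l X; rw [← Matrix.mul_assoc, hN2, Matrix.one_mul]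
  set M11 := M.toBlocks₁₁; set M12 := M.toBlocks₁₂; set M21 := M.toBlocks₂₁; set M22 := M.toBlocks₂₂
  set N11 := N.toBlocks₁₁; set N12 := N.toBlocks₁₂; set N21 := N.toBlocks₂₁; set N22 := N.toBlocks₂₂
  rw [hsub, PPT, PPT, Matrix.fromBlocks_multiply, Matrix.fromBlocks_multiply]
  rw [show (fromBlocks (-N11⁻¹) (N11⁻¹ * N12) (N21 * N11⁻¹) (N22 - N21 * N11⁻¹ * N12)
      - fromBlocks (-M11⁻¹) (M11⁻¹ * M12) (M21 * M11⁻¹) (M22 - M21 * M11⁻¹ * M12))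
      = fromBlocks (-N11⁻¹ - -M11⁻¹) (N11⁻¹ * N12 - M11⁻¹ * M12)
        (N21 * N11⁻¹ - M21 * M11⁻¹) ((N22 - N21 * N11⁻¹ * N12) - (M22 - M21 * M11⁻¹ * M12)) by
    ext (i|i) (j|j) <;> simp [fromBlocks]]
  rw [Matrix.fromBlocks_inj]
  refine ⟨?_, ?_, ?_, ?_⟩ <;>
  · simp only [Matrix.zero_mul, Matrix.mul_zero, add_zero, zero_add, Matrix.mul_sub,
      Matrix.sub_mul, Matrix.add_mul, Matrix.mul_add, Matrix.mul_one, Matrix.one_mul,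
      Matrix.neg_mul, Matrix.mul_neg, neg_neg, Matrix.mul_assoc, hN2, hM1, hN1, hM2,
      hM1', hM2', hN1', hN2']
    abel

theorem ppt_monotone {n m : ℕ}
    (A B : Matrix (Fin n ⊕ Fin m) (Fin n ⊕ Fin m) ℂ)
    (hA : A.IsHermitian) (hB : B.IsHermitian)
    (hline : ∀ t : ℝ, t ∈ Set.Icc (0 : ℝ) 1 →
      IsUnit (((1 - t : ℝ) : ℂ) • A.toBlocks₁₁ + ((t : ℝ) : ℂ) • B.toBlocks₁₁))
    (hAB : (B - A).PosSemidef) :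
    (PPT B - PPT A).PosSemidef := by
  set D := B - A with hDdef
  set Mt : ℝ → Matrix (Fin n ⊕ Fin m) (Fin n ⊕ Fin m) ℂ := fun t => A + ((t : ℝ) : ℂ) • D
    with hMtdef
  have hMt0 : Mt 0 = A := by simp [hMtdef]
  have hMt1 : Mt 1 = B := by simp [hMtdef, hDdef]
  have hMtHerm : ∀ t : ℝ, (Mt t).IsHermitian := by
    intro t
    rw [Matrix.IsHermitian, hMtdef]
    simp only [conjTranspose_add, conjTranspose_smul, hA.eq, hAB.1.eq]
    rw [Complex.star_def, Complex.conj_ofReal]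
  have hunit : ∀ t ∈ Set.Icc (0 : ℝ) 1, IsUnit (Mt t).toBlocks₁₁ := by
    intro t ht
    have h := hline t ht
    have : ((1 - t : ℝ) : ℂ) • A.toBlocks₁₁ + ((t : ℝ) : ℂ) • B.toBlocks₁₁
        = (Mt t).toBlocks₁₁ := by
      ext i j
      simp only [hMtdef, hDdef, toBlocks₁₁, Matrix.add_apply, Matrix.smul_apply,
        Matrix.sub_apply, of_apply, smul_eq_mul]
      push_cast
      ring
    rwa [this] at h
  have hdet : ∀ t ∈ Set.Icc (0 : ℝ) 1, IsUnit ((Mt t).toBlocks₁₁).det := fun t ht =>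
    (Matrix.isUnit_iff_isUnit_det _).mp (hunit t ht)
  -- continuity of the family
  have hMtcont : Continuous Mt := by
    apply continuous_matrix
    intro i j
    simp only [hMtdef, Matrix.add_apply, Matrix.smul_apply, smul_eq_mul]
    exact continuous_const.add (Complex.continuous_ofReal.mul continuous_const)
  have hb11 : Continuous fun t => (Mt t).toBlocks₁₁ :=
    hMtcont.matrix_submatrix Sum.inl Sum.inl
  have hb12 : Continuous fun t => (Mt t).toBlocks₁₂ :=
    hMtcont.matrix_submatrix Sum.inl Sum.inr
  have hinv : ∀ s ∈ Set.Icc (0 : ℝ) 1, ContinuousAt (fun t => ((Mt t).toBlocks₁₁)⁻¹) s := by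
    intro s hs
    have hri : ContinuousAt Ring.inverse ((Mt s).toBlocks₁₁).det := by
      rw [Ring.inverse_eq_inv']
      exact continuousAt_inv₀ ((hdet s hs).ne_zero)
    have hb : ContinuousAt (fun t => (Mt t).toBlocks₁₁) s := hb11.continuousAt
    have h2 : ContinuousAt (Inv.inv ∘ fun t => (Mt t).toBlocks₁₁) s :=
      ContinuousAt.comp (f := fun t => (Mt t).toBlocks₁₁) (x := s)
        (continuousAt_matrix_inv _ hri) hb
    exact h2
  set J : ℝ → Matrix (Fin n ⊕ Fin m) (Fin n ⊕ Fin m) ℂ := fun t =>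
    fromBlocks ((Mt t).toBlocks₁₁)⁻¹ (-(((Mt t).toBlocks₁₁)⁻¹ * (Mt t).toBlocks₁₂)) 0 1
    with hJdef
  have hJcont : ∀ s ∈ Set.Icc (0 : ℝ) 1, ContinuousAt J s := by
    intro s hs
    have hassemble : Continuous (fun p : Matrix (Fin n) (Fin n) ℂ × Matrix (Fin n) (Fin m) ℂ =>
        fromBlocks p.1 p.2 (0 : Matrix (Fin m) (Fin n) ℂ) (1 : Matrix (Fin m) (Fin m) ℂ)) :=
      Continuous.matrix_fromBlocks continuous_fst continuous_snd continuous_const continuous_const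
    have hmul : Continuous (fun p : Matrix (Fin n) (Fin n) ℂ × Matrix (Fin n) (Fin m) ℂ =>
        p.1 * p.2) := Continuous.matrix_mul continuous_fst continuous_snd
    have hQ : ContinuousAt (fun t => -(((Mt t).toBlocks₁₁)⁻¹ * (Mt t).toBlocks₁₂)) s :=
      (hmul.continuousAt.comp ((hinv s hs).prodMk hb12.continuousAt)).neg
    exact hassemble.continuousAt.comp ((hinv s hs).prodMk hQ)
  -- key algebraic identity along the segment
  have hseg : ∀ s t : ℝ, Mt t - Mt s = ((t - s : ℝ) : ℂ) • D := by
    intro s t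
    rw [hMtdef]
    simp only [Complex.ofReal_sub, sub_smul]
    abel
  have hdiff : ∀ s ∈ Set.Icc (0 : ℝ) 1, ∀ t ∈ Set.Icc (0 : ℝ) 1,
      PPT (Mt t) - PPT (Mt s) = ((t - s : ℝ) : ℂ) • ((J s)ᴴ * D * J t) := by
    intro s hs t ht
    have hid := PPTaux.ppt_diff (Mt s) (Mt t) (hunit s hs) (hunit t ht)
    rw [hid, hseg s t, ← PPTaux.Jconj (hMtHerm s)]
    rw [Matrix.mul_smul, Matrix.smul_mul]
  rw [posSemidef_iff_dotProduct_mulVec]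
  constructor
  · exact (PPTaux.ppt_isHermitian hB).sub (PPTaux.ppt_isHermitian hA)
  intro x
  set φ : ℝ → ℝ → ℝ := fun s t => (star x ⬝ᵥ (((J s)ᴴ * D * J t) *ᵥ x)).re with hφdef
  set g : ℝ → ℝ := fun t => (star x ⬝ᵥ (PPT (Mt t) *ᵥ x)).re with hgdef
  have key : ∀ s ∈ Set.Icc (0 : ℝ) 1, ∀ t ∈ Set.Icc (0 : ℝ) 1,
      g t - g s = (t - s) * φ s t := by
    intro s hs t ht
    have h1 : star x ⬝ᵥ ((PPT (Mt t) - PPT (Mt s)) *ᵥ x)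
        = ((t - s : ℝ) : ℂ) * (star x ⬝ᵥ (((J s)ᴴ * D * J t) *ᵥ x)) := by
      rw [hdiff s hs t ht, Matrix.smul_mulVec, dotProduct_smul, smul_eq_mul]
    have h2 : g t - g s = (star x ⬝ᵥ ((PPT (Mt t) - PPT (Mt s)) *ᵥ x)).re := by
      rw [hgdef]
      simp [Matrix.sub_mulVec, dotProduct_sub, Complex.sub_re]
    rw [h2, h1, Complex.re_ofReal_mul, hφdef]
  have hφcont : ∀ s0 : ℝ, ∀ u ∈ Set.Icc (0 : ℝ) 1, ContinuousAt (φ s0) u := by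
    intro s0 u hu
    have hout : Continuous (fun Z : Matrix (Fin n ⊕ Fin m) (Fin n ⊕ Fin m) ℂ =>
        (star x ⬝ᵥ ((((J s0)ᴴ * D) * Z) *ᵥ x)).re) := by
      apply Complex.continuous_re.comp
      exact (continuous_const.dotProduct
        (((continuous_const.matrix_mul continuous_id).matrix_mulVec continuous_const)))
    exact hout.continuousAt.comp (hJcont u hu)
  have hφnonneg : ∀ s ∈ Set.Icc (0 : ℝ) 1, 0 ≤ φ s s := by
    intro s hs
    have hpsd : ((J s)ᴴ * D * J s).PosSemidef := hAB.conjTranspose_mul_mul_same (J s)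
    simpa [hφdef] using hpsd.re_dotProduct_nonneg x
  have hgc : ContinuousOn g (Set.Icc 0 1) := by
    intro s hs
    have h0 : (0 : ℝ) ∈ Set.Icc (0 : ℝ) 1 := by constructor <;> norm_num
    have heq : ∀ t ∈ Set.Icc (0 : ℝ) 1, g t = g 0 + (t - 0) * φ 0 t := by
      intro t ht
      have := key 0 h0 t ht
      linarith
    have hcont : ContinuousWithinAt (fun t => g 0 + (t - 0) * φ 0 t) (Set.Icc 0 1) s :=
      (continuousAt_const.add ((continuousAt_id.sub continuousAt_const).mul
        (hφcont 0 s hs))).continuousWithinAt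
    exact hcont.congr heq (heq s hs)
  have hderiv : ∀ s ∈ Set.Ioo (0 : ℝ) 1, HasDerivAt g (φ s s) s := by
    intro s hs
    have hsIcc : s ∈ Set.Icc (0 : ℝ) 1 := Set.Ioo_subset_Icc_self hs
    rw [hasDerivAt_iff_tendsto_slope]
    have hmem : Set.Icc (0 : ℝ) 1 ∈ nhds s :=
      mem_nhds_iff.mpr ⟨Set.Ioo 0 1, Set.Ioo_subset_Icc_self, isOpen_Ioo, hs⟩
    have heq : ∀ᶠ t in nhdsWithin s {s}ᶜ, φ s t = slope g s t := by
      filter_upwards [nhdsWithin_le_nhds hmem, self_mem_nhdsWithin] with t ht hts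
      have h1 := key s hsIcc t ht
      rw [slope_def_field]
      field_simp [sub_ne_zero.mpr (Set.mem_compl_singleton_iff.mp hts)]
      linarith [h1]
    exact Filter.Tendsto.congr' heq
      (((hφcont s s hsIcc).tendsto).mono_left nhdsWithin_le_nhds)
  have hmono : MonotoneOn g (Set.Icc 0 1) := by
    apply monotoneOn_of_deriv_nonneg (convex_Icc 0 1) hgc
    · intro s hs
      rw [interior_Icc] at hs
      exact (hderiv s hs).differentiableAt.differentiableWithinAt
    · intro s hs
      rw [interior_Icc] at hs
      rw [(hderiv s hs).deriv]
      exact hφnonneg s (Set.Ioo_subset_Icc_self hs)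
  have h01 : g 0 ≤ g 1 := by
    have h0 : (0 : ℝ) ∈ Set.Icc (0 : ℝ) 1 := by constructor <;> norm_num
    have h1 : (1 : ℝ) ∈ Set.Icc (0 : ℝ) 1 := by constructor <;> norm_num
    exact hmono h0 h1 zero_le_one
  -- wrap up
  set z := star x ⬝ᵥ ((PPT B - PPT A) *ᵥ x) with hzdef
  have hzre : z.re = g 1 - g 0 := by
    simp only [hzdef, hgdef, hMt0, hMt1]
    simp [Matrix.sub_mulVec, dotProduct_sub, Complex.sub_re]
  have hherm : (PPT B - PPT A).IsHermitian :=
    (PPTaux.ppt_isHermitian hB).sub (PPTaux.ppt_isHermitian hA)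
  have hzstar : star z = z := by
    have h1 : star z = star x ⬝ᵥ ((PPT B - PPT A)ᴴ *ᵥ x) := by
      rw [hzdef, ← star_dotProduct_star, star_star, star_mulVec, ← dotProduct_mulVec]
    rw [h1, hherm.eq, hzdef]
  have him : z.im = 0 := by
    have := congrArg Complex.im hzstar
    simp only [Complex.star_def, Complex.conj_im] at this
    linarith
  rw [Complex.le_def]
  constructor
  · simp only [Complex.zero_re, hzre]
    linarith
  · simp [him]
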